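/- For every integer i ≥ 1, the infinite series ∑_{t=i}^∞ α_t^i converges and equals 1 + 1/H. -/

import Mathlib

/-- The learning rate `α_t = (H+1)/(H+t)`. -/
noncomputable def lrate (H t : ℕ) : ℝ := (H + 1) / (H + t)

/-- The weight `α_t^i = α_i · ∏_{j=i+1}^t (1 − α_j)`. -/
noncomputable def lrateW (H t i : ℕ) : ℝ :=
  lrate H i * ∏ j ∈ Finset.Icc (i + 1) t, (1 - lrate H j)

lemma w_formula (H i : ℕ) (hH : 1 ≤ H) (hi : 1 ≤ i) (N : ℕ) :
    lrateW H (i + N) i =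
      (1 + 1 / (H : ℝ)) * ((H : ℝ) / ((H : ℝ) + i + N)) *
        ∏ n ∈ Finset.range N, (((i : ℝ) + n) / ((H : ℝ) + i + n)) := by
  have hH0 : (0 : ℝ) < (H : ℝ) := by exact_mod_cast hH
  induction N with
  | zero =>
      have he : Finset.Icc (i + 1) i = ∅ := Finset.Icc_eq_empty (by omega)
      simp only [Nat.add_zero, lrateW, lrate, he, Finset.prod_empty, mul_one,
        Finset.range_zero, Nat.cast_zero, add_zero]
      have h1 : (H : ℝ) + i ≠ 0 := by positivity
      field_simp
  | succ N ih =>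
      have hstep : lrateW H (i + (N + 1)) i =
          lrateW H (i + N) i * (1 - lrate H (i + N + 1)) := by
        unfold lrateW
        rw [show i + (N + 1) = (i + N) + 1 from rfl,
          Finset.prod_Icc_succ_top (by omega : i + 1 ≤ i + N + 1)]
        ring
      rw [hstep, ih, Finset.prod_range_succ]
      have h1 : (H : ℝ) + i + N ≠ 0 := by positivity
      have h2 : (H : ℝ) + i + N + 1 ≠ 0 := by positivity
      unfold lrate
      push_cast
      field_simp
      ring

lemma sum_formula (H i : ℕ) (hH : 1 ≤ H) (hi : 1 ≤ i) (N : ℕ) :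
    ∑ n ∈ Finset.range N, lrateW H (i + n) i =
      (1 + 1 / (H : ℝ)) *
        (1 - ∏ n ∈ Finset.range N, (((i : ℝ) + n) / ((H : ℝ) + i + n))) := by
  have hH0 : (0 : ℝ) < (H : ℝ) := by exact_mod_cast hH
  induction N with
  | zero => simp
  | succ N ih =>
      rw [Finset.sum_range_succ, ih, w_formula H i hH hi, Finset.prod_range_succ]
      have h1 : (H : ℝ) + i + N ≠ 0 := by positivity
      field_simp
      ring

lemma prod_id (i : ℕ) (hi : 1 ≤ i) (N : ℕ) :
    ∏ n ∈ Finset.range N, (((i : ℝ) + n) / ((i : ℝ) + n + 1)) = (i : ℝ) / ((i : ℝ) + N) := by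
  have hi0 : (i : ℝ) ≠ 0 := by positivity
  induction N with
  | zero => simp [hi0]
  | succ N ih =>
      rw [Finset.prod_range_succ, ih]
      have h1 : (i : ℝ) + N ≠ 0 := by positivity
      have h2 : (i : ℝ) + N + 1 ≠ 0 := by positivity
      push_cast
      field_simp
      ring

lemma R_tendsto (H i : ℕ) (hH : 1 ≤ H) (hi : 1 ≤ i) :
    Filter.Tendsto
      (fun N => ∏ n ∈ Finset.range N, (((i : ℝ) + n) / ((H : ℝ) + i + n)))
      Filter.atTop (nhds 0) := by
  have hH0 : (0 : ℝ) < (H : ℝ) := by exact_mod_cast hH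
  have hub : ∀ N : ℕ, ∏ n ∈ Finset.range N, (((i : ℝ) + n) / ((H : ℝ) + i + n))
      ≤ (i : ℝ) / ((i : ℝ) + N) := by
    intro N
    have hle : ∏ n ∈ Finset.range N, (((i : ℝ) + n) / ((H : ℝ) + i + n))
        ≤ ∏ n ∈ Finset.range N, (((i : ℝ) + n) / ((i : ℝ) + n + 1)) := by
      apply Finset.prod_le_prod
      · intro n _; positivity
      · intro n _
        apply div_le_div_of_nonneg_left (by positivity) (by positivity)
        have : (1 : ℝ) ≤ (H : ℝ) := by exact_mod_cast hH
        linarith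
    rw [prod_id i hi N] at hle
    exact hle
  have hlb : ∀ N : ℕ, 0 ≤ ∏ n ∈ Finset.range N, (((i : ℝ) + n) / ((H : ℝ) + i + n)) := by
    intro N
    apply Finset.prod_nonneg
    intro n _; positivity
  have hlim : Filter.Tendsto (fun N : ℕ => (i : ℝ) / ((i : ℝ) + N))
      Filter.atTop (nhds 0) := by
    have h1 : Filter.Tendsto (fun N : ℕ => (i : ℝ) + N) Filter.atTop Filter.atTop :=
      Filter.tendsto_atTop_add_const_left _ _ tendsto_natCast_atTop_atTop
    have h2 := h1.inv_tendsto_atTop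
    have h3 := h2.const_mul (i : ℝ)
    simpa [div_eq_mul_inv] using h3
  exact squeeze_zero hlb hub hlim

theorem stmt_5 (H : ℕ) (hH : 1 ≤ H) (i : ℕ) (hi : 1 ≤ i) :
    HasSum (fun n : ℕ => lrateW H (i + n) i) (1 + 1 / (H : ℝ)) := by
  have hH0 : (0 : ℝ) < (H : ℝ) := by exact_mod_cast hH
  have hnonneg : ∀ n : ℕ, 0 ≤ lrateW H (i + n) i := by
    intro n
    rw [w_formula H i hH hi]
    apply mul_nonneg
    · apply mul_nonneg (by positivity) (by positivity)
    · apply Finset.prod_nonneg; intro m _; positivity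
  rw [hasSum_iff_tendsto_nat_of_nonneg hnonneg]
  have heq : (fun N => ∑ n ∈ Finset.range N, lrateW H (i + n) i)
      = fun N => (1 + 1 / (H : ℝ)) *
        (1 - ∏ n ∈ Finset.range N, (((i : ℝ) + n) / ((H : ℝ) + i + n))) := by
    funext N; exact sum_formula H i hH hi N
  rw [heq]
  have h0 := R_tendsto H i hH hi
  have h1 : Filter.Tendsto
      (fun N => 1 - ∏ n ∈ Finset.range N, (((i : ℝ) + n) / ((H : ℝ) + i + n)))
      Filter.atTop (nhds (1 - 0)) := (tendsto_const_nhds : Filter.Tendsto _ _ (nhds (1:ℝ))).sub h0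
  have h2 := h1.const_mul (1 + 1 / (H : ℝ))
  simpa using h2
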